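/- Assume μ satisfies Assumption (D). Let m > 0 and let L be a compact subset of {z ∈ ℂ : U_μ(z) ≥ m}. Then there exists a constant θ > 0 such that for every z ∈ L and every n, the probability that log|p_n(z)| < (1/2) m n is at most e^{−θ n}. -/

import Mathlib

open MeasureTheory ProbabilityTheory Filter Metric

/-- Logarithmic potential of a measure on ℂ. -/
noncomputable def logPot (μ : Measure ℂ) (z : ℂ) : ℝ :=
  ∫ w, Real.log ‖z - w‖ ∂μ

/-- Topological support of a measure on ℂ. -/
def msupport (μ : Measure ℂ) : Set ℂ :=
  {x : ℂ | ∀ U ∈ nhds x, 0 < μ U}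

/-- Assumption (A): for every compact `K`, `sup_{z ∈ K} ∫ (log|z-w|)² dμ(w) < ∞`. -/
def AssumptionA (μ : Measure ℂ) : Prop :=
  ∀ K : Set ℂ, IsCompact K → ∃ C : ℝ, ∀ z ∈ K,
    ∫⁻ w, ENNReal.ofReal ((Real.log ‖z - w‖) ^ 2) ∂μ ≤ ENNReal.ofReal C

/-- Assumption (D): `μ(B(z,r)) ≤ C rᵉ` for all `z` and `r > 0`. -/
def AssumptionD (μ : Measure ℂ) : Prop :=
  ∃ C : ℝ, ∃ ε : ℝ, 0 < ε ∧ ∀ z : ℂ, ∀ r : ℝ, 0 < r →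
    μ (Metric.ball z r) ≤ ENNReal.ofReal (C * r ^ ε)

/-- The filled unit lemniscate of `p_n(z) = ∏_{k<n} (z - X k ω)`. -/
def lemniscate {Ω : Type*} (X : ℕ → Ω → ℂ) (n : ℕ) (ω : Ω) : Set ℂ :=
  {z : ℂ | ‖∏ k ∈ Finset.range n, (z - X k ω)‖ < 1}

/-- Inradius of a planar set: the sup of radii of open disks contained in it (0 if none). -/
noncomputable def inradius (U : Set ℂ) : ℝ :=
  sSup {r : ℝ | 0 < r ∧ ∃ c : ℂ, Metric.ball c r ⊆ U}

open scoped ENNReal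

/-- Elementary: `e^x - 1 ≤ x e^x` for all real `x`. -/
lemma exp_sub_one_le (x : ℝ) : Real.exp x - 1 ≤ x * Real.exp x := by
  have h := Real.add_one_le_exp (-x)
  have hx : Real.exp (-x) * Real.exp x = 1 := by
    rw [← Real.exp_add]; simp
  have hpos := Real.exp_pos x
  nlinarith [mul_le_mul_of_nonneg_right h hpos.le]

/-- Elementary second-order bound: `e^x ≤ 1 + x + x² e^{|x|}`. -/
lemma exp_taylor_bound (x : ℝ) : Real.exp x ≤ 1 + x + x ^ 2 * Real.exp |x| := by
  have h1 : Real.exp x - 1 - x ≤ x * (Real.exp x - 1) := by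
    have := exp_sub_one_le x; nlinarith
  rcases le_or_gt 0 x with hx | hx
  · have habs : |x| = x := abs_of_nonneg hx
    have h2 : x * (Real.exp x - 1) ≤ x * (x * Real.exp x) :=
      mul_le_mul_of_nonneg_left (by linarith [exp_sub_one_le x]) hx
    rw [habs]; nlinarith
  · have habs : |x| = -x := abs_of_neg hx
    have h3 : 1 - Real.exp x ≤ -x := by linarith [Real.add_one_le_exp x]
    have h2 : x * (Real.exp x - 1) ≤ x ^ 2 := by nlinarith
    have h4 : (1 : ℝ) ≤ Real.exp |x| := Real.one_le_exp (abs_nonneg x)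
    nlinarith [sq_nonneg x]

lemma msupport_compl_null (μ : Measure ℂ) : μ (msupport μ)ᶜ = 0 := by
  obtain ⟨B, hBc, -, hBb⟩ := TopologicalSpace.exists_countable_basis ℂ
  set N : Set (Set ℂ) := {u ∈ B | μ u = 0} with hN
  have hsub : (msupport μ)ᶜ ⊆ ⋃₀ N := by
    intro x hx
    simp only [Set.mem_compl_iff, msupport, Set.mem_setOf_eq, not_forall] at hx
    obtain ⟨U, hU, hUpos⟩ := hx
    have hU0 : μ U = 0 := by
      by_contra h
      exact hUpos (pos_iff_ne_zero.mpr h)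
    obtain ⟨u, huB, hxu, huU⟩ := hBb.mem_nhds_iff.mp hU
    exact ⟨u, ⟨huB, le_antisymm (le_trans (measure_mono huU) hU0.le) (zero_le)⟩, hxu⟩
  have : μ (⋃₀ N) = 0 := by
    apply measure_sUnion_null_iff (hBc.mono (Set.sep_subset _ _)) |>.mpr
    intro s hs; exact hs.2
  exact le_antisymm (le_trans (measure_mono hsub) this.le) (zero_le)

lemma singleton_null (μ : Measure ℂ) (C ε : ℝ) (hε : 0 < ε)
    (hD : ∀ z : ℂ, ∀ r : ℝ, 0 < r → μ (Metric.ball z r) ≤ ENNReal.ofReal (C * r ^ ε))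
    (z : ℂ) : μ {z} = 0 := by
  have key : ∀ n : ℕ, μ {z} ≤ ENNReal.ofReal (C * ((1/2 : ℝ) ^ n) ^ ε) := by
    intro n
    refine le_trans (measure_mono ?_) (hD z ((1/2 : ℝ) ^ n) (by positivity))
    intro w hw
    simp only [Set.mem_singleton_iff] at hw
    subst hw
    exact Metric.mem_ball_self (by positivity)
  have htend : Tendsto (fun n : ℕ => ENNReal.ofReal (C * ((1/2 : ℝ) ^ n) ^ ε)) atTop (nhds 0) := by
    have h1 : Tendsto (fun n : ℕ => ((1/2 : ℝ) ^ n) ^ ε) atTop (nhds 0) := by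
      have h2 : Tendsto (fun n : ℕ => ((1/2 : ℝ) ^ n)) atTop (nhds 0) :=
        tendsto_pow_atTop_nhds_zero_of_lt_one (by norm_num) (by norm_num)
      have h3 : ContinuousWithinAt (fun x : ℝ => x ^ ε) (Set.Ici 0) 0 := by
        apply (Real.continuousAt_rpow_const 0 ε (Or.inr hε.le)).continuousWithinAt
      have := h3.tendsto.comp (tendsto_nhdsWithin_iff.mpr ⟨h2,
        Filter.Eventually.of_forall fun n => Set.mem_Ici.mpr (by positivity)⟩)
      simpa [Real.zero_rpow hε.ne', Function.comp_def] using this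
    have : Tendsto (fun n : ℕ => C * ((1/2 : ℝ) ^ n) ^ ε) atTop (nhds 0) := by
      simpa using h1.const_mul C
    simpa using (ENNReal.tendsto_ofReal this)
  exact le_antisymm (ge_of_tendsto' htend key) (zero_le)

lemma half_pow_rpow (k : ℕ) (x : ℝ) : (((1/2:ℝ)) ^ k) ^ x = (2:ℝ) ^ (-(k:ℝ) * x) := by
  rw [one_div, ← Real.rpow_natCast (2:ℝ)⁻¹ k, ← Real.rpow_neg_one (2:ℝ),
    ← Real.rpow_mul (by norm_num), ← Real.rpow_mul (by norm_num)]
  ring_nf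

lemma key_lintegral (μ : Measure ℂ) (C ε q : ℝ) (hC : 0 ≤ C) (hq : 0 < q) (hqε : q < ε)
    (hD : ∀ z : ℂ, ∀ r : ℝ, 0 < r → μ (Metric.ball z r) ≤ ENNReal.ofReal (C * r ^ ε)) (z : ℂ) :
    ∫⁻ w in Metric.ball z 1, ENNReal.ofReal (‖z - w‖ ^ (-q)) ∂μ ≤
      ENNReal.ofReal (C * 2 ^ q) * (1 - ENNReal.ofReal ((2:ℝ) ^ (q - ε)))⁻¹ := by
  set f : ℂ → ℝ≥0∞ := fun w => ENNReal.ofReal (‖z - w‖ ^ (-q)) with hf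
  set A : ℕ → Set ℂ := fun j => Metric.ball z ((1/2:ℝ)^j) \ Metric.ball z ((1/2:ℝ)^(j+1)) with hA
  have hcover : Metric.ball z 1 ⊆ {z} ∪ ⋃ j, A j := by
    intro w hw
    rcases eq_or_ne w z with h | h
    · exact Or.inl h
    · right
      have hr0 : 0 < dist w z := dist_pos.mpr h
      have hr1 : dist w z < 1 := mem_ball.mp hw
      have hex : ∃ j : ℕ, (1/2:ℝ)^(j+1) ≤ dist w z := by
        obtain ⟨n, hn⟩ := exists_pow_lt_of_lt_one hr0 (by norm_num : (1/2:ℝ) < 1)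
        exact ⟨n, by
          calc (1/2:ℝ)^(n+1) ≤ (1/2:ℝ)^n :=
                pow_le_pow_of_le_one (by norm_num) (by norm_num) (Nat.le_succ n)
            _ ≤ dist w z := hn.le⟩
      refine Set.mem_iUnion.mpr ⟨Nat.find hex, ?_, ?_⟩
      · rw [mem_ball]
        rcases Nat.eq_zero_or_pos (Nat.find hex) with h0 | hpos
        · rw [h0]; simpa using hr1
        · obtain ⟨k, hk⟩ := Nat.exists_eq_succ_of_ne_zero hpos.ne'
          rw [hk]
          have := Nat.find_min hex (by omega : k < Nat.find hex)
          push_neg at this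
          simpa [hk] using this
      · intro hmem
        exact (mem_ball.mp hmem).not_ge (Nat.find_spec hex)
  have hmeasA : ∀ j, MeasurableSet (A j) := fun j =>
    measurableSet_ball.diff measurableSet_ball
  have hz0 : ∫⁻ w in {z}, f w ∂μ = 0 := by
    have hcongr : ∀ w ∈ ({z} : Set ℂ), f w = 0 := by
      intro w hw
      rcases hw with rfl
      simp only [hf, sub_self, norm_zero, Real.zero_rpow (neg_ne_zero.mpr hq.ne'),
        ENNReal.ofReal_zero]
    rw [setLIntegral_congr_fun (measurableSet_singleton z) (show Set.EqOn f (fun _ => 0) {z} from hcongr)]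
    simp
  have hAj : ∀ j : ℕ, ∫⁻ w in A j, f w ∂μ ≤
      ENNReal.ofReal (C * 2 ^ q) * (ENNReal.ofReal ((2:ℝ) ^ (q - ε))) ^ j := by
    intro j
    have h2 : (0:ℝ) < 2 := two_pos
    have hb : ∀ w ∈ A j, f w ≤ ENNReal.ofReal (((1/2:ℝ) ^ (j+1)) ^ (-q)) := by
      intro w hw
      apply ENNReal.ofReal_le_ofReal
      have h1 : (1/2:ℝ) ^ (j+1) ≤ ‖z - w‖ := by
        have h2' := hw.2
        rw [mem_ball] at h2'
        push_neg at h2'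
        calc (1/2:ℝ) ^ (j+1) ≤ dist w z := h2'
          _ = ‖z - w‖ := by rw [dist_comm, Complex.dist_eq]
      exact Real.rpow_le_rpow_of_nonpos (by positivity) h1 (neg_nonpos.mpr hq.le)
    calc ∫⁻ w in A j, f w ∂μ
        ≤ ∫⁻ _ in A j, ENNReal.ofReal (((1/2:ℝ) ^ (j+1)) ^ (-q)) ∂μ :=
          setLIntegral_mono' (hmeasA j) hb
      _ = ENNReal.ofReal (((1/2:ℝ) ^ (j+1)) ^ (-q)) * μ (A j) := setLIntegral_const _ _
      _ ≤ ENNReal.ofReal (((1/2:ℝ) ^ (j+1)) ^ (-q)) * ENNReal.ofReal (C * ((1/2:ℝ) ^ j) ^ ε) := by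
          gcongr
          exact le_trans (measure_mono Set.diff_subset) (hD z _ (by positivity))
      _ = ENNReal.ofReal ((((1/2:ℝ) ^ (j+1)) ^ (-q)) * (C * ((1/2:ℝ) ^ j) ^ ε)) := by
          rw [← ENNReal.ofReal_mul (by positivity)]
      _ = ENNReal.ofReal ((C * 2 ^ q) * ((2:ℝ) ^ (q - ε)) ^ j) := by
          congr 1
          have hj : ((2:ℝ) ^ (q - ε)) ^ j = (2:ℝ) ^ ((q - ε) * (j:ℝ)) := by
            rw [← Real.rpow_natCast ((2:ℝ) ^ (q - ε)) j, ← Real.rpow_mul h2.le]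
          rw [hj, half_pow_rpow, half_pow_rpow]
          calc (2:ℝ) ^ (-((j:ℕ)+1:ℕ) * (-q) : ℝ) * (C * (2:ℝ) ^ (-(j:ℝ) * ε))
              = C * (2:ℝ) ^ ((-((j:ℕ)+1:ℕ) * (-q) : ℝ) + (-(j:ℝ) * ε)) := by
                rw [Real.rpow_add h2]; ring
            _ = C * (2:ℝ) ^ (q + (q - ε) * (j:ℝ)) := by
                congr 1
                push_cast
                ring
            _ = C * 2 ^ q * (2:ℝ) ^ ((q - ε) * (j:ℝ)) := by
                rw [Real.rpow_add h2]; ring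
      _ = ENNReal.ofReal (C * 2 ^ q) * (ENNReal.ofReal ((2:ℝ) ^ (q - ε))) ^ j := by
          rw [ENNReal.ofReal_mul (by positivity), ENNReal.ofReal_pow (by positivity)]
  calc ∫⁻ w in Metric.ball z 1, f w ∂μ
      ≤ ∫⁻ w in {z} ∪ ⋃ j, A j, f w ∂μ := lintegral_mono_set hcover
    _ ≤ (∫⁻ w in {z}, f w ∂μ) + ∫⁻ w in ⋃ j, A j, f w ∂μ := lintegral_union_le _ _ _
    _ ≤ 0 + ∑' j, ∫⁻ w in A j, f w ∂μ := by
        rw [hz0]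
        gcongr
        exact lintegral_iUnion_le _ _
    _ ≤ ∑' j : ℕ, ENNReal.ofReal (C * 2 ^ q) * (ENNReal.ofReal ((2:ℝ) ^ (q - ε))) ^ j := by
        rw [zero_add]
        exact ENNReal.tsum_le_tsum hAj
    _ = ENNReal.ofReal (C * 2 ^ q) * (1 - ENNReal.ofReal ((2:ℝ) ^ (q - ε)))⁻¹ := by
        rw [ENNReal.tsum_mul_left, ENNReal.tsum_geometric]

set_option maxHeartbeats 2000000 in
theorem statement15
    {Ω : Type*} [MeasurableSpace Ω] (P : Measure Ω) [IsProbabilityMeasure P]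
    (μ : Measure ℂ) [IsProbabilityMeasure μ] (hS : IsCompact (msupport μ))
    (hD : AssumptionD μ)
    (X : ℕ → Ω → ℂ) (hmeas : ∀ i, Measurable (X i))
    (hid : ∀ i, Measure.map (X i) P = μ)
    (hindep : iIndepFun X P)
    (m : ℝ) (hm : 0 < m)
    (L : Set ℂ) (hL : IsCompact L) (hLsub : L ⊆ {z : ℂ | m ≤ logPot μ z}) :
    ∃ θ > (0 : ℝ), ∀ z ∈ L, ∀ n : ℕ,
      P {ω | Real.log ‖∏ k ∈ Finset.range n, (z - X k ω)‖ <
          1 / 2 * m * n} ≤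
        ENNReal.ofReal (Real.exp (-θ * n)) := by
  classical
  obtain ⟨C0, ε, hε, hD0⟩ := hD
  set C : ℝ := max C0 1 with hCdef
  have hC1 : (1:ℝ) ≤ C := le_max_right _ _
  have hC0 : (0:ℝ) ≤ C := by linarith
  have hDC : ∀ z : ℂ, ∀ r : ℝ, 0 < r → μ (Metric.ball z r) ≤ ENNReal.ofReal (C * r ^ ε) := by
    intro z r hr
    refine (hD0 z r hr).trans (ENNReal.ofReal_le_ofReal ?_)
    exact mul_le_mul_of_nonneg_right (le_max_left _ _) (Real.rpow_nonneg hr.le ε)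
  -- geometry: a.e. w lies in the support, and distances are bounded by R₀
  obtain ⟨R₁, hR₁⟩ := hL.isBounded.subset_closedBall 0
  obtain ⟨R₂, hR₂⟩ := hS.isBounded.subset_closedBall 0
  set R₀ : ℝ := |R₁| + |R₂| + 3 with hR₀def
  have hR₀3 : (3:ℝ) ≤ R₀ := by
    have := abs_nonneg R₁; have := abs_nonneg R₂; linarith
  have hR₀1 : (1:ℝ) ≤ R₀ := by linarith
  have hR₀pos : (0:ℝ) < R₀ := by linarith
  have hlogR₀ : 0 ≤ Real.log R₀ := Real.log_nonneg hR₀1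
  have hdist : ∀ z ∈ L, ∀ w ∈ msupport μ, ‖z - w‖ ≤ R₀ := by
    intro z hz w hw
    rw [← Complex.dist_eq]
    calc dist z w ≤ dist z 0 + dist 0 w := dist_triangle _ _ _
      _ = dist z 0 + dist w 0 := by rw [dist_comm 0 w]
      _ ≤ R₁ + R₂ := add_le_add (hR₁ hz) (hR₂ hw)
      _ ≤ R₀ := by
          have := le_abs_self R₁; have := le_abs_self R₂; linarith
  have hsupp_ae : ∀ᵐ w ∂μ, w ∈ msupport μ := by
    have h := msupport_compl_null μ
    rw [ae_iff]
    exact h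
  -- parameters
  set δ : ℝ := ε / 4 with hδdef
  have hδ : 0 < δ := by positivity
  set s₀ : ℝ := ε / 2 with hs₀def
  have hs₀ : 0 < s₀ := by positivity
  set q : ℝ := 3 * ε / 4 with hqdef
  have hq : 0 < q := by positivity
  have hqε : q < ε := by rw [hqdef]; linarith
  have hq_eq : q = δ + s₀ := by rw [hqdef, hδdef, hs₀def]; ring
  set A : ℝ := (2 / δ) ^ 2 with hAdef
  have hA0 : 0 ≤ A := by positivity
  set M : ℝ := (Real.log R₀) ^ 2 * R₀ ^ s₀ with hMdef
  have hM0 : 0 ≤ M := by positivity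
  set Benn : ℝ≥0∞ := ENNReal.ofReal (C * 2 ^ q) * (1 - ENNReal.ofReal ((2:ℝ) ^ (q - ε)))⁻¹
    with hBenndef
  have hBenn_ne_top : Benn ≠ ⊤ := by
    apply ENNReal.mul_ne_top ENNReal.ofReal_ne_top
    rw [ENNReal.inv_ne_top]
    intro h0
    rw [tsub_eq_zero_iff_le] at h0
    have hlt : (2:ℝ) ^ (q - ε) < 1 :=
      Real.rpow_lt_one_of_one_lt_of_neg one_lt_two (by linarith)
    have : ENNReal.ofReal ((2:ℝ) ^ (q - ε)) < 1 := by
      rw [← ENNReal.ofReal_one]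
      exact ENNReal.ofReal_lt_ofReal_iff_of_nonneg (by positivity) |>.mpr hlt
    exact absurd h0 this.not_ge
  set Kenn : ℝ≥0∞ := ENNReal.ofReal M + ENNReal.ofReal A * Benn with hKenndef
  have hKenn_ne_top : Kenn ≠ ⊤ :=
    ENNReal.add_ne_top.mpr ⟨ENNReal.ofReal_ne_top,
      ENNReal.mul_ne_top ENNReal.ofReal_ne_top hBenn_ne_top⟩
  set K : ℝ := Kenn.toReal with hKdef
  have hK0 : 0 ≤ K := ENNReal.toReal_nonneg
  set s : ℝ := min s₀ (m / (4 * (K + 1))) with hsdef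
  have hs : 0 < s := lt_min hs₀ (by positivity)
  have hss₀ : s ≤ s₀ := min_le_left _ _
  have hsK : s * K ≤ m / 4 := by
    have h1 : s ≤ m / (4 * (K + 1)) := min_le_right _ _
    have h2 : s * K ≤ (m / (4 * (K + 1))) * K := mul_le_mul_of_nonneg_right h1 hK0
    have h3 : (m / (4 * (K + 1))) * K ≤ m / 4 := by
      rw [div_mul_eq_mul_div, div_le_div_iff₀ (by positivity) (by norm_num)]
      nlinarith
    linarith
  refine ⟨s * m / 4, by positivity, ?_⟩
  intro z hz n
  -- per-z objects
  set Y : ℂ → ℝ := fun w => Real.log (‖z - w‖) with hYdef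
  have hYmeas : Measurable Y := by
    apply Real.measurable_log.comp
    exact continuous_norm.measurable.comp (measurable_const.sub measurable_id)
  set F : ℂ → ℝ := fun w => (Y w) ^ 2 * Real.exp (s₀ * |Y w|) with hFdef
  have hF0 : ∀ w, 0 ≤ F w := fun w => by positivity
  have hFmeas : Measurable F := by
    apply ((hYmeas.pow_const 2).mul)
    exact (hYmeas.abs.const_mul s₀).exp
  -- pointwise bounds for F
  have hball : ∀ w ∈ Metric.ball z 1, F w ≤ A * ‖z - w‖ ^ (-q) := by
    intro w hw
    rcases eq_or_lt_of_le (norm_nonneg (z - w)) with h0 | hr0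
    · have h00 : ‖z - w‖ = 0 := h0.symm
      simp only [hFdef, hYdef, h00, Real.log_zero]
      rw [Real.zero_rpow (neg_ne_zero.mpr hq.ne')]
      simp
    · have hr1 : ‖z - w‖ < 1 := by
        rw [mem_ball, dist_comm, Complex.dist_eq] at hw
        exact hw
      set r : ℝ := ‖z - w‖ with hrdef
      have hrinv1 : 1 ≤ r⁻¹ := (one_le_inv₀ hr0).mpr hr1.le
      have hrinvpos : 0 < r⁻¹ := by positivity
      have habsY : |Y w| = Real.log r⁻¹ := by
        simp only [hYdef]
        rw [show ‖z - w‖ = r from hrdef.symm, Real.log_inv,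
          abs_of_nonpos (Real.log_nonpos hr0.le hr1.le)]
      have hY2 : (Y w) ^ 2 = (Real.log r⁻¹) ^ 2 := by
        rw [← sq_abs, habsY]
      have hlog_le : Real.log r⁻¹ ≤ (2 / δ) * r⁻¹ ^ (δ / 2) := by
        have h := Real.log_le_rpow_div hrinvpos.le (by positivity : (0:ℝ) < δ / 2)
        calc Real.log r⁻¹ ≤ r⁻¹ ^ (δ / 2) / (δ / 2) := h
          _ = (2 / δ) * r⁻¹ ^ (δ / 2) := by field_simp
      have hlog_nonneg : 0 ≤ Real.log r⁻¹ := Real.log_nonneg hrinv1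
      have hsq : (Real.log r⁻¹) ^ 2 ≤ A * r⁻¹ ^ δ := by
        have h2 : (Real.log r⁻¹) ^ 2 ≤ ((2 / δ) * r⁻¹ ^ (δ / 2)) ^ 2 :=
          pow_le_pow_left₀ hlog_nonneg hlog_le 2
        have h3 : ((2 / δ) * r⁻¹ ^ (δ / 2)) ^ 2 = A * (r⁻¹ ^ (δ / 2)) ^ 2 := by
          rw [mul_pow, hAdef]
        have h4 : (r⁻¹ ^ (δ / 2)) ^ 2 = r⁻¹ ^ δ := by
          rw [sq, ← Real.rpow_add hrinvpos]
          norm_num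
        rw [h3, h4] at h2
        exact h2
      have hexp : Real.exp (s₀ * |Y w|) = r⁻¹ ^ s₀ := by
        rw [habsY, Real.rpow_def_of_pos hrinvpos, mul_comm]
      calc F w = (Real.log r⁻¹) ^ 2 * (r⁻¹ ^ s₀) := by
            simp only [hFdef]
            rw [hY2, hexp]
        _ ≤ (A * r⁻¹ ^ δ) * (r⁻¹ ^ s₀) :=
            mul_le_mul_of_nonneg_right hsq (by positivity)
        _ = A * r⁻¹ ^ (δ + s₀) := by rw [mul_assoc, ← Real.rpow_add hrinvpos]
        _ = A * r ^ (-q) := by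
            rw [hq_eq, Real.inv_rpow hr0.le, ← Real.rpow_neg hr0.le]
  have hout : ∀ w, w ∈ msupport μ → w ∉ Metric.ball z 1 → F w ≤ M := by
    intro w hw hnb
    have hr1 : 1 ≤ ‖z - w‖ := by
      rw [mem_ball] at hnb
      push_neg at hnb
      calc (1:ℝ) ≤ dist w z := hnb
        _ = ‖z - w‖ := by rw [dist_comm, Complex.dist_eq]
    have hrR : ‖z - w‖ ≤ R₀ := hdist z hz w hw
    have hY0 : 0 ≤ Y w := Real.log_nonneg hr1
    have hYle : Y w ≤ Real.log R₀ := Real.log_le_log (by linarith) hrR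
    have habsY : |Y w| = Y w := abs_of_nonneg hY0
    have hexp_le : Real.exp (s₀ * |Y w|) ≤ R₀ ^ s₀ := by
      rw [habsY, Real.rpow_def_of_pos hR₀pos, mul_comm (Real.log R₀) s₀]
      exact Real.exp_le_exp.mpr (mul_le_mul_of_nonneg_left hYle hs₀.le)
    have hsq_le : (Y w) ^ 2 ≤ (Real.log R₀) ^ 2 := by
      apply pow_le_pow_left₀ hY0 hYle
    calc F w = (Y w) ^ 2 * Real.exp (s₀ * |Y w|) := rfl
      _ ≤ (Real.log R₀) ^ 2 * R₀ ^ s₀ := by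
          apply mul_le_mul hsq_le hexp_le (Real.exp_nonneg _) (by positivity)
      _ = M := rfl
  -- the master lintegral bound for F
  have hFlint : ∫⁻ w, ENNReal.ofReal (F w) ∂μ ≤ Kenn := by
    rw [← lintegral_add_compl (μ := μ) (fun w => ENNReal.ofReal (F w))
      (measurableSet_ball : MeasurableSet (Metric.ball z 1))]
    have hpart1 : ∫⁻ w in Metric.ball z 1, ENNReal.ofReal (F w) ∂μ ≤ ENNReal.ofReal A * Benn := by
      calc ∫⁻ w in Metric.ball z 1, ENNReal.ofReal (F w) ∂μ
          ≤ ∫⁻ w in Metric.ball z 1,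
              ENNReal.ofReal A * ENNReal.ofReal (‖z - w‖ ^ (-q)) ∂μ := by
            apply setLIntegral_mono' measurableSet_ball
            intro w hw
            rw [← ENNReal.ofReal_mul hA0]
            exact ENNReal.ofReal_le_ofReal (hball w hw)
        _ = ENNReal.ofReal A *
              ∫⁻ w in Metric.ball z 1, ENNReal.ofReal (‖z - w‖ ^ (-q)) ∂μ :=
            lintegral_const_mul' _ _ ENNReal.ofReal_ne_top
        _ ≤ ENNReal.ofReal A * Benn := by
            gcongr
            exact key_lintegral μ C ε q hC0 hq hqε hDC z
    have hpart2 : ∫⁻ w in (Metric.ball z 1)ᶜ, ENNReal.ofReal (F w) ∂μ ≤ ENNReal.ofReal M := by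
      have hae : ∀ᵐ w ∂(μ.restrict (Metric.ball z 1)ᶜ),
          ENNReal.ofReal (F w) ≤ ENNReal.ofReal M := by
        filter_upwards [ae_restrict_of_ae hsupp_ae,
          ae_restrict_mem measurableSet_ball.compl] with w h1 h2
        exact ENNReal.ofReal_le_ofReal (hout w h1 h2)
      calc ∫⁻ w in (Metric.ball z 1)ᶜ, ENNReal.ofReal (F w) ∂μ
          ≤ ∫⁻ _ in (Metric.ball z 1)ᶜ, ENNReal.ofReal M ∂μ := lintegral_mono_ae hae
        _ = ENNReal.ofReal M * μ (Metric.ball z 1)ᶜ := setLIntegral_const _ _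
        _ ≤ ENNReal.ofReal M * 1 := by gcongr; exact prob_le_one
        _ = ENNReal.ofReal M := mul_one _
    calc (∫⁻ w in Metric.ball z 1, ENNReal.ofReal (F w) ∂μ) +
          ∫⁻ w in (Metric.ball z 1)ᶜ, ENNReal.ofReal (F w) ∂μ
        ≤ ENNReal.ofReal A * Benn + ENNReal.ofReal M := add_le_add hpart1 hpart2
      _ = Kenn := by rw [hKenndef, add_comm]
  -- integrability
  have hFint : Integrable F μ := by
    refine ⟨hFmeas.aestronglyMeasurable, ?_⟩
    rw [hasFiniteIntegral_iff_ofReal (ae_of_all _ hF0)]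
    exact lt_of_le_of_lt hFlint (lt_top_iff_ne_top.mpr hKenn_ne_top)
  have h1F_int : Integrable (fun w => 1 + F w) μ := (integrable_const 1).add hFint
  have hYint : Integrable Y μ := by
    apply Integrable.mono' h1F_int hYmeas.aestronglyMeasurable
    apply ae_of_all
    intro w
    have h1 : 1 ≤ Real.exp (s₀ * |Y w|) := Real.one_le_exp (by positivity)
    have h2 : |Y w| ≤ 1 + (Y w) ^ 2 := by nlinarith [sq_abs (Y w), sq_nonneg (|Y w| - 1)]
    have h3 : (Y w) ^ 2 ≤ F w := by
      have h31 : (Y w) ^ 2 * 1 ≤ (Y w) ^ 2 * Real.exp (s₀ * |Y w|) :=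
        mul_le_mul_of_nonneg_left h1 (sq_nonneg _)
      rw [mul_one] at h31
      simpa only [hFdef] using h31
    rw [Real.norm_eq_abs]
    linarith
  have hFKle : ∫ w, F w ∂μ ≤ K := by
    rw [integral_eq_lintegral_of_nonneg_ae (ae_of_all _ hF0) hFmeas.aestronglyMeasurable]
    exact ENNReal.toReal_mono hKenn_ne_top hFlint
  -- pointwise Taylor bound
  have hptw : ∀ w, Real.exp (-s * Y w) ≤ 1 - s * Y w + s ^ 2 * F w := by
    intro w
    have h := exp_taylor_bound (-(s * Y w))
    have hE : Real.exp (s * |Y w|) ≤ Real.exp (s₀ * |Y w|) :=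
      Real.exp_le_exp.mpr (mul_le_mul_of_nonneg_right hss₀ (abs_nonneg _))
    have habs : |(-(s * Y w))| = s * |Y w| := by
      rw [abs_neg, abs_mul, abs_of_nonneg hs.le]
    rw [habs] at h
    have hEmul : (-(s * Y w)) ^ 2 * Real.exp (s * |Y w|) ≤ s ^ 2 * F w := by
      have hsq : (-(s * Y w)) ^ 2 = s ^ 2 * (Y w) ^ 2 := by ring
      rw [hsq]
      calc s ^ 2 * (Y w) ^ 2 * Real.exp (s * |Y w|)
          ≤ s ^ 2 * (Y w) ^ 2 * Real.exp (s₀ * |Y w|) :=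
            mul_le_mul_of_nonneg_left hE (by positivity)
        _ = s ^ 2 * F w := by simp only [hFdef]; ring
    rw [neg_mul]
    linarith
  have hexp_int : Integrable (fun w => Real.exp (-s * Y w)) μ := by
    apply Integrable.mono' (h1F_int.const_mul (1 + s + s ^ 2))
      (((hYmeas.const_mul (-s)).exp).aestronglyMeasurable)
    apply ae_of_all
    intro w
    have h1 : 1 ≤ Real.exp (s₀ * |Y w|) := Real.one_le_exp (by positivity)
    have h2 : |Y w| ≤ 1 + (Y w) ^ 2 := by nlinarith [sq_abs (Y w), sq_nonneg (|Y w| - 1)]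
    have h3 := hptw w
    have h4 : -s * Y w ≤ s * |Y w| := by
      rw [neg_mul]
      calc -(s * Y w) ≤ |s * Y w| := neg_le_abs _
        _ = s * |Y w| := by rw [abs_mul, abs_of_nonneg hs.le]
    have h5 : 0 ≤ F w := hF0 w
    have hnorm : ‖Real.exp (-s * Y w)‖ = Real.exp (-s * Y w) := by
      rw [Real.norm_eq_abs, abs_of_pos (Real.exp_pos _)]
    rw [hnorm]
    calc Real.exp (-s * Y w) ≤ 1 - s * Y w + s ^ 2 * F w := h3
      _ ≤ 1 + s * |Y w| + s ^ 2 * F w := by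
          have : -(s * Y w) ≤ s * |Y w| := by
            calc -(s * Y w) ≤ |s * Y w| := neg_le_abs _
              _ = s * |Y w| := by rw [abs_mul, abs_of_nonneg hs.le]
          linarith
      _ ≤ (1 + s + s ^ 2) * (1 + F w) := by
          have h6 : (Y w) ^ 2 ≤ F w := by
            have h31 : (Y w) ^ 2 * 1 ≤ (Y w) ^ 2 * Real.exp (s₀ * |Y w|) :=
              mul_le_mul_of_nonneg_left h1 (sq_nonneg _)
            rw [mul_one] at h31
            simpa only [hFdef] using h31
          nlinarith [hs.le, h5, h2, h6, sq_nonneg s]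
  -- the moment generating bound under μ
  have hmgf_mu : ∫ w, Real.exp (-s * Y w) ∂μ ≤ Real.exp (-(3/4) * s * m) := by
    have hrhs_int : Integrable (fun w => 1 - s * Y w + s ^ 2 * F w) μ :=
      ((integrable_const 1).sub (hYint.const_mul s)).add (hFint.const_mul (s ^ 2))
    have h6 : ∫ w, Real.exp (-s * Y w) ∂μ ≤ ∫ w, (1 - s * Y w + s ^ 2 * F w) ∂μ :=
      integral_mono hexp_int hrhs_int hptw
    have hval : ∫ w, (1 - s * Y w + s ^ 2 * F w) ∂μ =
        1 - s * (∫ w, Y w ∂μ) + s ^ 2 * (∫ w, F w ∂μ) := by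
      have i1 : Integrable (fun w => 1 - s * Y w) μ := by
        exact (integrable_const (1:ℝ)).sub (hYint.const_mul s)
      have i2 : Integrable (fun w => s ^ 2 * F w) μ := hFint.const_mul _
      rw [integral_add i1 i2, integral_const_mul,
        integral_sub (integrable_const 1) (hYint.const_mul s), integral_const,
        integral_const_mul]
      simp [measure_univ]
    have hY_ge : m ≤ ∫ w, Y w ∂μ := hLsub hz
    have hchain : ∫ w, (1 - s * Y w + s ^ 2 * F w) ∂μ ≤ 1 - (3/4) * s * m := by
      rw [hval]
      have e1 : s * m ≤ s * (∫ w, Y w ∂μ) := mul_le_mul_of_nonneg_left hY_ge hs.le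
      have e2 : s ^ 2 * (∫ w, F w ∂μ) ≤ s ^ 2 * K :=
        mul_le_mul_of_nonneg_left hFKle (by positivity)
      have e3 : s ^ 2 * K ≤ s * (m / 4) := by
        rw [sq, mul_assoc]
        exact mul_le_mul_of_nonneg_left hsK hs.le
      nlinarith
    calc ∫ w, Real.exp (-s * Y w) ∂μ ≤ 1 - (3/4) * s * m := h6.trans hchain
      _ ≤ Real.exp (-(3/4) * s * m) := by
          have := Real.add_one_le_exp (-(3/4) * s * m)
          linarith
  -- transfer to Ω
  set g : ℂ → ℝ := fun w => Real.exp (-s * Y w) with hgdef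
  have hgmeas : Measurable g := Real.measurable_exp.comp (hYmeas.const_mul (-s))
  set Yk : ℕ → Ω → ℝ := fun k => Y ∘ X k with hYkdef
  have hYkmeas : ∀ k, Measurable (Yk k) := fun k => hYmeas.comp (hmeas k)
  have hindepY : iIndepFun Yk P :=
    hindep.comp (fun _ => Y) (fun _ => hYmeas)
  have hint_k : ∀ k, Integrable (fun ω => Real.exp (-s * Yk k ω)) P := by
    intro k
    have h := hexp_int
    rw [← hid k] at h
    have h2 := (integrable_map_measure hgmeas.aestronglyMeasurable
      (hmeas k).aemeasurable).mp h
    simpa [hgdef, hYkdef, Function.comp, Function.comp_def] using h2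
  have hmgf_k : ∀ k, mgf (Yk k) P (-s) ≤ Real.exp (-(3/4) * s * m) := by
    intro k
    have heq : mgf (Yk k) P (-s) = ∫ w, g w ∂μ := by
      calc mgf (Yk k) P (-s) = ∫ ω, g (X k ω) ∂P := rfl
        _ = ∫ w, g w ∂(Measure.map (X k) P) :=
            (integral_map (hmeas k).aemeasurable hgmeas.aestronglyMeasurable).symm
        _ = ∫ w, g w ∂μ := by rw [hid k]
    rw [heq]
    exact hmgf_mu
  set Sn : Ω → ℝ := ∑ k ∈ Finset.range n, Yk k with hSndef
  have hintSum : Integrable (fun ω => Real.exp (-s * Sn ω)) P := by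
    have h := hindepY.integrable_exp_mul_sum (t := -s) hYkmeas
      (s := Finset.range n) (fun k _ => hint_k k)
    simpa [hSndef] using h
  have chern := measure_le_le_exp_mul_mgf (μ := P) (X := Sn) (1/2*m*n)
    (neg_nonpos.mpr hs.le) hintSum
  have hprod : mgf Sn P (-s) = ∏ k ∈ Finset.range n, mgf (Yk k) P (-s) :=
    hindepY.mgf_sum hYkmeas _
  have hprod_le : ∏ k ∈ Finset.range n, mgf (Yk k) P (-s) ≤ Real.exp (-(3/4)*s*m) ^ n := by
    calc ∏ k ∈ Finset.range n, mgf (Yk k) P (-s)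
        ≤ ∏ _k ∈ Finset.range n, Real.exp (-(3/4)*s*m) :=
          Finset.prod_le_prod (fun k _ => mgf_nonneg) (fun k _ => hmgf_k k)
      _ = Real.exp (-(3/4)*s*m) ^ n := by rw [Finset.prod_const, Finset.card_range]
  have hfinal_real : (P {ω | Sn ω ≤ 1/2*m*n}).toReal ≤ Real.exp (-(s*m/4) * n) := by
    calc (P {ω | Sn ω ≤ 1/2*m*n}).toReal
        ≤ Real.exp (-(-s) * (1/2*m*n)) * mgf Sn P (-s) := chern
      _ ≤ Real.exp (-(-s) * (1/2*m*n)) * (Real.exp (-(3/4)*s*m) ^ n) := by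
          exact mul_le_mul_of_nonneg_left (hprod ▸ hprod_le) (Real.exp_nonneg _)
      _ = Real.exp (-(s*m/4) * n) := by
          rw [← Real.exp_nat_mul, ← Real.exp_add]
          congr 1
          push_cast
          ring
  have hμz : μ {z} = 0 := singleton_null μ C ε hε hDC z
  set N : Set Ω := ⋃ k ∈ Finset.range n, X k ⁻¹' {z} with hNdef
  have hN0 : P N = 0 := by
    rw [hNdef]
    apply measure_biUnion_null_iff (Finset.range n).countable_toSet |>.mpr
    intro k _
    rw [← Measure.map_apply (hmeas k) (measurableSet_singleton z), hid k]
    exact hμz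
  have hsub : {ω | Real.log ‖∏ k ∈ Finset.range n, (z - X k ω)‖ < 1/2*m*n}
      ⊆ {ω | Sn ω ≤ 1/2*m*n} ∪ N := by
    intro ω hω
    by_cases hNmem : ω ∈ N
    · exact Or.inr hNmem
    · left
      have hne : ∀ k ∈ Finset.range n, z - X k ω ≠ 0 := by
        intro k hk h0
        apply hNmem
        rw [hNdef]
        exact Set.mem_biUnion hk (by simp [Set.mem_preimage, (sub_eq_zero.mp h0).symm])
      have heq : Real.log ‖∏ k ∈ Finset.range n, (z - X k ω)‖ = Sn ω := by
        rw [norm_prod (Finset.range n) (fun k => z - X k ω),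
          Real.log_prod (fun k hk => norm_ne_zero_iff.mpr (hne k hk)),
          hSndef]
        simp [hYkdef, hYdef, Finset.sum_apply]
      rw [Set.mem_setOf_eq, heq] at hω
      exact hω.le
  calc P {ω | Real.log ‖∏ k ∈ Finset.range n, (z - X k ω)‖ < 1/2*m*n}
      ≤ P ({ω | Sn ω ≤ 1/2*m*n} ∪ N) := measure_mono hsub
    _ ≤ P {ω | Sn ω ≤ 1/2*m*n} + P N := measure_union_le _ _
    _ = P {ω | Sn ω ≤ 1/2*m*n} := by rw [hN0, add_zero]
    _ ≤ ENNReal.ofReal (Real.exp (-(s*m/4) * n)) := by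
        rw [← ENNReal.ofReal_toReal (measure_ne_top P _)]
        exact ENNReal.ofReal_le_ofReal hfinal_real
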